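/- arXiv:2506.04430 — 2 statements merged into one kernel-verified Lean document; each statement's English description precedes it below -/
import Mathlib

section
/- Let A, B ∈ ℝ^{m×n} with reduced singular value decompositions A = U_A Σ_A V_A^T and B = U_B Σ_B V_B^T. Then |⟨A, U_A V_A^T − U_B V_B^T⟩| ≤ 2·‖A − B‖_{S₁} ≤ 2·√(rank(A−B))·‖A − B‖_F. -/
open scoped Matrix

/-- The nuclear norm (Schatten-1 norm) of a real matrix: the sum of its singular values,
i.e. of the square roots of the eigenvalues of `Aᵀ * A`. -/
noncomputable def nuclearNorm {m n : ℕ} (A : Matrix (Fin m) (Fin n) ℝ) : ℝ :=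
  ∑ j, Real.sqrt ((Matrix.isHermitian_conjTranspose_mul_self A).eigenvalues j)

/-- The Frobenius norm of a real matrix. -/
noncomputable def frobNorm {m n : ℕ} (A : Matrix (Fin m) (Fin n) ℝ) : ℝ :=
  Real.sqrt (∑ i, ∑ j, (A i j) ^ 2)

/-- The trace inner product `⟨X, Y⟩ := tr(Xᵀ Y)` on `ℝ^{m×n}`. -/
noncomputable def matInner {m n : ℕ} (X Y : Matrix (Fin m) (Fin n) ℝ) : ℝ :=
  Matrix.trace (Xᵀ * Y)

/- ### Auxiliary lemmas -/

lemma aux_dot_self_nonneg {k : ℕ} (v : Fin k → ℝ) : 0 ≤ v ⬝ᵥ v :=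
  Finset.sum_nonneg fun _ _ => mul_self_nonneg _

lemma aux_dot_le {k : ℕ} (u w : Fin k → ℝ) :
    u ⬝ᵥ w ≤ Real.sqrt (u ⬝ᵥ u) * Real.sqrt (w ⬝ᵥ w) := by
  have h := Real.sum_mul_le_sqrt_mul_sqrt Finset.univ u w
  have h1 : u ⬝ᵥ u = ∑ i, u i ^ 2 := by simp [dotProduct, sq]
  have h2 : w ⬝ᵥ w = ∑ i, w i ^ 2 := by simp [dotProduct, sq]
  rw [h1, h2]
  simpa [dotProduct] using h

lemma aux_abs_dot_le {k : ℕ} (u w : Fin k → ℝ) :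
    |u ⬝ᵥ w| ≤ Real.sqrt (u ⬝ᵥ u) * Real.sqrt (w ⬝ᵥ w) := by
  rw [abs_le]
  refine ⟨?_, aux_dot_le u w⟩
  have h := aux_dot_le (-u) w
  have e1 : (-u) ⬝ᵥ w = -(u ⬝ᵥ w) := by simp [dotProduct]
  have e2 : (-u) ⬝ᵥ (-u) = u ⬝ᵥ u := by simp [dotProduct]
  rw [e1, e2] at h
  linarith

lemma aux_dot_mulVec_self {a b : ℕ} (W : Matrix (Fin a) (Fin b) ℝ) (z : Fin b → ℝ) :
    z ⬝ᵥ ((Wᵀ * W) *ᵥ z) = (W *ᵥ z) ⬝ᵥ (W *ᵥ z) := by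
  rw [← Matrix.mulVec_mulVec, Matrix.dotProduct_mulVec, Matrix.vecMul_transpose]

/-- `U Vᵀ` is a contraction when `U, V` have orthonormal columns. -/
lemma aux_contraction_UV {m n r : ℕ} (U : Matrix (Fin m) (Fin r) ℝ)
    (V : Matrix (Fin n) (Fin r) ℝ)
    (hU : Uᵀ * U = 1) (hV : Vᵀ * V = 1) (x : Fin n → ℝ) :
    ((U * Vᵀ) *ᵥ x) ⬝ᵥ ((U * Vᵀ) *ᵥ x) ≤ x ⬝ᵥ x := by
  set w : Fin r → ℝ := Vᵀ *ᵥ x with hw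
  have e1 : (U * Vᵀ) *ᵥ x = U *ᵥ w := by rw [← Matrix.mulVec_mulVec]
  have e2 : (U *ᵥ w) ⬝ᵥ (U *ᵥ w) = w ⬝ᵥ w := by
    rw [← aux_dot_mulVec_self, hU, Matrix.one_mulVec]
  rw [e1, e2]
  set y : Fin n → ℝ := x - V *ᵥ w with hy
  have h0 : 0 ≤ y ⬝ᵥ y := aux_dot_self_nonneg y
  have e3 : x ⬝ᵥ (V *ᵥ w) = w ⬝ᵥ w := by
    rw [Matrix.dotProduct_mulVec, ← Matrix.mulVec_transpose]
  have e4 : (V *ᵥ w) ⬝ᵥ (V *ᵥ w) = w ⬝ᵥ w := by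
    rw [← aux_dot_mulVec_self, hV, Matrix.one_mulVec]
  have e5 : (V *ᵥ w) ⬝ᵥ x = w ⬝ᵥ w := by rw [dotProduct_comm]; exact e3
  have e6 : y ⬝ᵥ y = x ⬝ᵥ x - w ⬝ᵥ w := by
    rw [hy, sub_dotProduct, dotProduct_sub, dotProduct_sub, e3, e4, e5]
    ring
  linarith [e6 ▸ h0]

/-- Duality bound against the reduced SVD: `|tr((U S Vᵀ)ᵀ M)| ≤ tr S` for a contraction `M`. -/
lemma aux_L2 {m n r : ℕ} (U : Matrix (Fin m) (Fin r) ℝ) (S : Matrix (Fin r) (Fin r) ℝ)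
    (V : Matrix (Fin n) (Fin r) ℝ)
    (hU : Uᵀ * U = 1) (hV : Vᵀ * V = 1)
    (hSdiag : ∀ i j, i ≠ j → S i j = 0) (hSpos : ∀ i, 0 ≤ S i i)
    (M : Matrix (Fin m) (Fin n) ℝ)
    (hM : ∀ v : Fin n → ℝ, (M *ᵥ v) ⬝ᵥ (M *ᵥ v) ≤ v ⬝ᵥ v) :
    |Matrix.trace ((U * S * Vᵀ)ᵀ * M)| ≤ Matrix.trace S := by
  set N : Matrix (Fin r) (Fin r) ℝ := Uᵀ * (M * V) with hN
  have e1 : (U * S * Vᵀ)ᵀ * M = V * (Sᵀ * (Uᵀ * M)) := by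
    simp only [Matrix.transpose_mul, Matrix.transpose_transpose, Matrix.mul_assoc]
  have e2 : Matrix.trace ((U * S * Vᵀ)ᵀ * M) = Matrix.trace (Sᵀ * N) := by
    rw [e1, Matrix.trace_mul_comm, hN]
    congr 1
    simp only [Matrix.mul_assoc]
  have e3 : ∀ i, (Sᵀ * N) i i = S i i * N i i := by
    intro i
    rw [Matrix.mul_apply, Finset.sum_eq_single i]
    · rw [Matrix.transpose_apply]
    · intro b _ hb
      rw [Matrix.transpose_apply, hSdiag b i hb, zero_mul]
    · intro h; exact absurd (Finset.mem_univ i) h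
  have e4 : ∀ i, N i i = (fun a => U a i) ⬝ᵥ (M *ᵥ (fun b => V b i)) := by
    intro i
    simp [hN, Matrix.mul_apply, Matrix.mulVec, dotProduct, Matrix.transpose_apply]
  have hNle : ∀ i, |N i i| ≤ 1 := by
    intro i
    rw [e4 i]
    have hu : (fun a => U a i) ⬝ᵥ (fun a => U a i) = 1 := by
      have := congrFun (congrFun hU i) i
      simpa [Matrix.mul_apply, dotProduct, Matrix.one_apply, Matrix.transpose_apply]
        using this
    have hv : (fun b => V b i) ⬝ᵥ (fun b => V b i) = 1 := by
      have := congrFun (congrFun hV i) i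
      simpa [Matrix.mul_apply, dotProduct, Matrix.one_apply, Matrix.transpose_apply]
        using this
    have h := aux_abs_dot_le (fun a => U a i) (M *ᵥ (fun b => V b i))
    rw [hu, Real.sqrt_one, one_mul] at h
    refine h.trans ?_
    rw [← Real.sqrt_one]
    apply Real.sqrt_le_sqrt
    exact (hM _).trans_eq hv
  have htr : Matrix.trace (Sᵀ * N) = ∑ i, S i i * N i i := by
    rw [Matrix.trace]
    exact Finset.sum_congr rfl fun i _ => e3 i
  rw [e2, htr]
  calc |∑ i, S i i * N i i| ≤ ∑ i, |S i i * N i i| := Finset.abs_sum_le_sum_abs _ _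
    _ ≤ ∑ i, S i i := by
        refine Finset.sum_le_sum fun i _ => ?_
        rw [abs_mul, abs_of_nonneg (hSpos i)]
        calc S i i * |N i i| ≤ S i i * 1 :=
              mul_le_mul_of_nonneg_left (hNle i) (hSpos i)
          _ = S i i := mul_one _
    _ = Matrix.trace S := rfl

/-- Duality bound against the nuclear norm: `|tr(Xᵀ M)| ≤ ‖X‖_{S₁}` for a contraction `M`. -/
lemma aux_L1 {m n : ℕ} (X M : Matrix (Fin m) (Fin n) ℝ)
    (hM : ∀ v : Fin n → ℝ, (M *ᵥ v) ⬝ᵥ (M *ᵥ v) ≤ v ⬝ᵥ v) :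
    |Matrix.trace (Xᵀ * M)| ≤ nuclearNorm X := by
  set hH := Matrix.isHermitian_conjTranspose_mul_self X with hHdef
  set q : Fin n → (Fin n → ℝ) := fun j => ⇑(hH.eigenvectorBasis j) with hq
  have horth : ∀ j k, (∑ i, q j i * q k i) = if j = k then (1:ℝ) else 0 := by
    intro j k
    have h := (orthonormal_iff_ite.mp hH.eigenvectorBasis.orthonormal) j k
    simpa [PiLp.inner_apply, RCLike.inner_apply, conj_trivial, mul_comm, hq] using h
  have hdelta : ∀ a b, (∑ j, q j a * q j b) = if a = b then (1:ℝ) else 0 := by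
    set P : Matrix (Fin n) (Fin n) ℝ := Matrix.of fun a j => q j a with hP
    have hPt : Pᵀ * P = 1 := by
      ext j k
      rw [Matrix.mul_apply, Matrix.one_apply]
      simpa [hP, Matrix.transpose_apply] using horth j k
    have hPPt : P * Pᵀ = 1 := mul_eq_one_comm.mp hPt
    intro a b
    have := congrFun (congrFun hPPt a) b
    rw [Matrix.mul_apply, Matrix.one_apply] at this
    simpa [hP, Matrix.transpose_apply] using this
  have expand : ∀ j, (X *ᵥ q j) ⬝ᵥ (M *ᵥ q j)
      = ∑ a, ∑ b, (∑ i, X i a * M i b) * (q j a * q j b) := by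
    intro j
    simp only [dotProduct, Matrix.mulVec]
    calc ∑ i, (∑ a, X i a * q j a) * (∑ b, M i b * q j b)
        = ∑ i, ∑ a, ∑ b, (X i a * q j a) * (M i b * q j b) := by
          refine Finset.sum_congr rfl fun i _ => ?_
          rw [Finset.sum_mul_sum]
      _ = ∑ a, ∑ i, ∑ b, (X i a * q j a) * (M i b * q j b) := Finset.sum_comm
      _ = ∑ a, ∑ b, ∑ i, (X i a * q j a) * (M i b * q j b) :=
          Finset.sum_congr rfl fun a _ => Finset.sum_comm
      _ = ∑ a, ∑ b, (∑ i, X i a * M i b) * (q j a * q j b) := by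
          refine Finset.sum_congr rfl fun a _ => Finset.sum_congr rfl fun b _ => ?_
          rw [Finset.sum_mul]
          exact Finset.sum_congr rfl fun i _ => by ring
  have htrace : Matrix.trace (Xᵀ * M) = ∑ j, (X *ᵥ q j) ⬝ᵥ (M *ᵥ q j) := by
    calc Matrix.trace (Xᵀ * M) = ∑ a, ∑ i, X i a * M i a := by
          simp [Matrix.trace, Matrix.diag, Matrix.mul_apply, Matrix.transpose_apply]
      _ = ∑ a, ∑ b, (∑ i, X i a * M i b) * (if a = b then (1:ℝ) else 0) := by
          refine Finset.sum_congr rfl fun a _ => ?_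
          symm
          simp [mul_ite, mul_one, mul_zero, Finset.sum_ite_eq]
      _ = ∑ a, ∑ b, (∑ i, X i a * M i b) * (∑ j, q j a * q j b) := by
          refine Finset.sum_congr rfl fun a _ => Finset.sum_congr rfl fun b _ => ?_
          rw [hdelta a b]
      _ = ∑ a, ∑ b, ∑ j, (∑ i, X i a * M i b) * (q j a * q j b) := by
          refine Finset.sum_congr rfl fun a _ => Finset.sum_congr rfl fun b _ => ?_
          rw [Finset.mul_sum]
      _ = ∑ j, ∑ a, ∑ b, (∑ i, X i a * M i b) * (q j a * q j b) := by
          rw [show (∑ a, ∑ b, ∑ j, (∑ i, X i a * M i b) * (q j a * q j b))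
              = ∑ a, ∑ j, ∑ b, (∑ i, X i a * M i b) * (q j a * q j b) from
            Finset.sum_congr rfl fun a _ => Finset.sum_comm]
          exact Finset.sum_comm
      _ = ∑ j, (X *ᵥ q j) ⬝ᵥ (M *ᵥ q j) :=
          Finset.sum_congr rfl fun j _ => (expand j).symm
  have hqq : ∀ j, q j ⬝ᵥ q j = 1 := by
    intro j
    have := horth j j
    simpa [dotProduct] using this
  have heig : ∀ j, (X *ᵥ q j) ⬝ᵥ (X *ᵥ q j) = hH.eigenvalues j := by
    intro j
    rw [← aux_dot_mulVec_self, ← Matrix.conjTranspose_eq_transpose_of_trivial,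
      hH.mulVec_eigenvectorBasis]
    have : q j ⬝ᵥ (hH.eigenvalues j • q j) = hH.eigenvalues j * (q j ⬝ᵥ q j) := by
      simp only [dotProduct, Pi.smul_apply, smul_eq_mul, Finset.mul_sum]
      exact Finset.sum_congr rfl fun i _ => by ring
    rw [this, hqq, mul_one]
  have hb : ∀ j, |(X *ᵥ q j) ⬝ᵥ (M *ᵥ q j)| ≤ Real.sqrt (hH.eigenvalues j) := by
    intro j
    have h := aux_abs_dot_le (X *ᵥ q j) (M *ᵥ q j)
    rw [heig j] at h
    refine h.trans ?_
    have h2 : Real.sqrt ((M *ᵥ q j) ⬝ᵥ (M *ᵥ q j)) ≤ 1 := by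
      rw [← Real.sqrt_one]
      exact Real.sqrt_le_sqrt ((hM _).trans_eq (hqq j))
    calc Real.sqrt (hH.eigenvalues j) * Real.sqrt ((M *ᵥ q j) ⬝ᵥ (M *ᵥ q j))
        ≤ Real.sqrt (hH.eigenvalues j) * 1 :=
          mul_le_mul_of_nonneg_left h2 (Real.sqrt_nonneg _)
      _ = _ := mul_one _
  rw [htrace]
  calc |∑ j, (X *ᵥ q j) ⬝ᵥ (M *ᵥ q j)| ≤ ∑ j, |(X *ᵥ q j) ⬝ᵥ (M *ᵥ q j)| :=
        Finset.abs_sum_le_sum_abs _ _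
    _ ≤ ∑ j, Real.sqrt (hH.eigenvalues j) := Finset.sum_le_sum fun j _ => hb j
    _ = nuclearNorm X := rfl

/-- The nuclear norm is at most `√rank` times the Frobenius norm. -/
lemma aux_nuclear_le_sqrt_rank_mul_frob {m n : ℕ} (X : Matrix (Fin m) (Fin n) ℝ) :
    nuclearNorm X ≤ Real.sqrt (X.rank : ℝ) * frobNorm X := by
  classical
  set hH := Matrix.isHermitian_conjTranspose_mul_self X with hHdef
  set e : Fin n → ℝ := hH.eigenvalues with he
  have hepos : ∀ j, 0 ≤ e j := fun j =>
    Matrix.eigenvalues_conjTranspose_mul_self_nonneg X j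
  -- trace of XᴴX equals the sum of eigenvalues
  have htr : Matrix.trace (Xᴴ * X) = ∑ j, e j := by
    conv_lhs => rw [hH.spectral_theorem]
    rw [Unitary.conjStarAlgAut_apply]
    rw [Matrix.trace_mul_cycle]
    rw [show (star (hH.eigenvectorUnitary : Matrix (Fin n) (Fin n) ℝ)) *
        (hH.eigenvectorUnitary : Matrix (Fin n) (Fin n) ℝ) = 1 from
      Unitary.coe_star_mul_self hH.eigenvectorUnitary]
    simp [Matrix.trace_diagonal]; rfl
  -- Frobenius norm in terms of eigenvalues
  have hfr : frobNorm X = Real.sqrt (∑ j, e j) := by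
    rw [frobNorm, ← htr]
    congr 1
    rw [Matrix.trace]
    rw [show (∑ i, ∑ j, (X i j) ^ 2) = ∑ a, ∑ i, X i a * X i a by
      rw [Finset.sum_comm]
      exact Finset.sum_congr rfl fun a _ => Finset.sum_congr rfl fun i _ => (sq (X i a)) ▸ rfl]
    refine (Finset.sum_congr rfl fun a _ => ?_).symm
    simp [Matrix.diag, Matrix.mul_apply, Matrix.conjTranspose_apply]
  -- rank equals the number of nonzero eigenvalues
  set s : Finset (Fin n) := Finset.univ.filter (fun j => e j ≠ 0) with hs
  have hcard : (s.card : ℝ) = (X.rank : ℝ) := by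
    have h1 : (Xᴴ * X).rank = Fintype.card {i // e i ≠ 0} :=
      hH.rank_eq_card_non_zero_eigs
    have h2 : (Xᴴ * X).rank = X.rank := by
      rw [Matrix.conjTranspose_eq_transpose_of_trivial]
      exact Matrix.rank_transpose_mul_self X
    have h3 : Fintype.card {i // e i ≠ 0} = s.card := Fintype.card_subtype _
    rw [← h3, ← h1, h2]
  -- restrict the sum to nonzero eigenvalues
  have hnuc : nuclearNorm X = ∑ j ∈ s, Real.sqrt (e j) := by
    rw [nuclearNorm]
    refine (Finset.sum_subset (Finset.filter_subset _ _) ?_).symm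
    intro j _ hj
    simp only [Finset.mem_filter, Finset.mem_univ, true_and, not_not] at hj
    show Real.sqrt (e j) = 0
    rw [hj, Real.sqrt_zero]
  -- Cauchy–Schwarz
  have hCS := Real.sum_mul_le_sqrt_mul_sqrt s (fun j => Real.sqrt (e j)) (fun _ => (1:ℝ))
  simp only [mul_one, one_pow] at hCS
  have hsq : ∑ j ∈ s, Real.sqrt (e j) ^ 2 = ∑ j ∈ s, e j := by
    exact Finset.sum_congr rfl fun j _ => Real.sq_sqrt (hepos j)
  have hle : ∑ j ∈ s, e j ≤ ∑ j, e j :=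
    Finset.sum_le_sum_of_subset_of_nonneg (Finset.subset_univ s)
      (fun j _ _ => hepos j)
  have hcardsum : ∑ _j ∈ s, (1:ℝ) = (s.card : ℝ) := by simp
  calc nuclearNorm X = ∑ j ∈ s, Real.sqrt (e j) := hnuc
    _ ≤ Real.sqrt (∑ j ∈ s, Real.sqrt (e j) ^ 2) * Real.sqrt (∑ _j ∈ s, (1:ℝ)) := hCS
    _ = Real.sqrt (∑ j ∈ s, e j) * Real.sqrt ((s.card : ℝ)) := by rw [hsq, hcardsum]
    _ ≤ Real.sqrt (∑ j, e j) * Real.sqrt ((s.card : ℝ)) :=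
        mul_le_mul_of_nonneg_right (Real.sqrt_le_sqrt hle) (Real.sqrt_nonneg _)
    _ = Real.sqrt ((X.rank : ℝ)) * frobNorm X := by
        rw [hcard, hfr, mul_comm]

/-- **Lemma 2 of the paper.** Let `A, B ∈ ℝ^{m×n}` with reduced SVDs
`A = U_A Σ_A V_Aᵀ` and `B = U_B Σ_B V_Bᵀ`.  Then
`|⟨A, U_A V_Aᵀ − U_B V_Bᵀ⟩| ≤ 2‖A − B‖_{S₁} ≤ 2√(rank(A−B)) ‖A − B‖_F`. -/
theorem abs_matInner_svdFactors_le
    {m n rA rB : ℕ} (A B : Matrix (Fin m) (Fin n) ℝ)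
    (UA : Matrix (Fin m) (Fin rA) ℝ) (SA : Matrix (Fin rA) (Fin rA) ℝ)
    (VA : Matrix (Fin n) (Fin rA) ℝ)
    (UB : Matrix (Fin m) (Fin rB) ℝ) (SB : Matrix (Fin rB) (Fin rB) ℝ)
    (VB : Matrix (Fin n) (Fin rB) ℝ)
    (hUA : UAᵀ * UA = 1) (hVA : VAᵀ * VA = 1)
    (hSAdiag : ∀ i j, i ≠ j → SA i j = 0) (hSApos : ∀ i, 0 ≤ SA i i)
    (hA : A = UA * SA * VAᵀ)
    (hUB : UBᵀ * UB = 1) (hVB : VBᵀ * VB = 1)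
    (hSBdiag : ∀ i j, i ≠ j → SB i j = 0) (hSBpos : ∀ i, 0 ≤ SB i i)
    (hB : B = UB * SB * VBᵀ) :
    |matInner A (UA * VAᵀ - UB * VBᵀ)| ≤ 2 * nuclearNorm (A - B) ∧
      2 * nuclearNorm (A - B) ≤ 2 * Real.sqrt ((A - B).rank : ℝ) * frobNorm (A - B) := by
  have hcA : ∀ v : Fin n → ℝ, ((UA * VAᵀ) *ᵥ v) ⬝ᵥ ((UA * VAᵀ) *ᵥ v) ≤ v ⬝ᵥ v :=
    aux_contraction_UV UA VA hUA hVA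
  have hcB : ∀ v : Fin n → ℝ, ((UB * VBᵀ) *ᵥ v) ⬝ᵥ ((UB * VBᵀ) *ᵥ v) ≤ v ⬝ᵥ v :=
    aux_contraction_UV UB VB hUB hVB
  -- ⟨A, U_A V_Aᵀ⟩ = tr Σ_A
  have h1 : matInner A (UA * VAᵀ) = Matrix.trace SA := by
    rw [matInner, hA]
    have e1 : (UA * SA * VAᵀ)ᵀ * (UA * VAᵀ) = VA * (SAᵀ * ((UAᵀ * UA) * VAᵀ)) := by
      simp only [Matrix.transpose_mul, Matrix.transpose_transpose, Matrix.mul_assoc]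
    rw [e1, hUA, Matrix.one_mul, Matrix.trace_mul_comm, Matrix.mul_assoc, hVA,
      Matrix.mul_one, Matrix.trace_transpose]
  -- ⟨B, U_B V_Bᵀ⟩ = tr Σ_B
  have h2 : matInner B (UB * VBᵀ) = Matrix.trace SB := by
    rw [matInner, hB]
    have e1 : (UB * SB * VBᵀ)ᵀ * (UB * VBᵀ) = VB * (SBᵀ * ((UBᵀ * UB) * VBᵀ)) := by
      simp only [Matrix.transpose_mul, Matrix.transpose_transpose, Matrix.mul_assoc]
    rw [e1, hUB, Matrix.one_mul, Matrix.trace_mul_comm, Matrix.mul_assoc, hVB,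
      Matrix.mul_one, Matrix.trace_transpose]
  -- duality bounds
  have h3 : |matInner A (UB * VBᵀ)| ≤ Matrix.trace SA := by
    rw [matInner, hA]
    exact aux_L2 UA SA VA hUA hVA hSAdiag hSApos _ hcB
  have h4 : |matInner B (UA * VAᵀ)| ≤ Matrix.trace SB := by
    rw [matInner, hB]
    exact aux_L2 UB SB VB hUB hVB hSBdiag hSBpos _ hcA
  have h5 : |matInner (A - B) (UA * VAᵀ)| ≤ nuclearNorm (A - B) := by
    rw [matInner]
    exact aux_L1 (A - B) _ hcA
  have h6 : |matInner (A - B) (UB * VBᵀ)| ≤ nuclearNorm (A - B) := by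
    rw [matInner]
    exact aux_L1 (A - B) _ hcB
  -- linearity of the trace inner product
  have lin1 : matInner A (UA * VAᵀ - UB * VBᵀ)
      = matInner A (UA * VAᵀ) - matInner A (UB * VBᵀ) := by
    simp [matInner, Matrix.mul_sub]
  have lin2 : ∀ Y : Matrix (Fin m) (Fin n) ℝ,
      matInner A Y = matInner (A - B) Y + matInner B Y := by
    intro Y
    simp [matInner, Matrix.transpose_sub, Matrix.sub_mul]
  constructor
  · have habs3 := abs_le.mp h3
    have habs4 := abs_le.mp h4
    have habs5 := abs_le.mp h5
    have habs6 := abs_le.mp h6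
    have hval : matInner A (UA * VAᵀ - UB * VBᵀ)
        = Matrix.trace SA - matInner A (UB * VBᵀ) := by rw [lin1, h1]
    have hnonneg : 0 ≤ matInner A (UA * VAᵀ - UB * VBᵀ) := by
      rw [hval]; linarith [habs3.2]
    rw [abs_of_nonneg hnonneg, lin1, lin2 (UA * VAᵀ), lin2 (UB * VBᵀ)]
    have hBQ : matInner B (UB * VBᵀ) = Matrix.trace SB := h2
    linarith [habs4.2, habs5.2, habs6.1]
  · have := aux_nuclear_le_sqrt_rank_mul_frob (A - B)
    nlinarith [Real.sqrt_nonneg ((A - B).rank : ℝ),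
      Real.sqrt_nonneg (∑ i, ∑ j, ((A - B) i j) ^ 2)]
end

section
/- Let f : ℝ^{m×n} → ℝ be differentiable with L-smooth gradient (‖∇f(X)−∇f(Y)‖_F ≤ L‖X−Y‖_F for all X, Y), let m ≥ n, let X† ∈ ℝ^{m×n} and M ∈ ℝ^{m×n} be arbitrary, let M = U_M Σ_M V_M^T be a reduced SVD of M, and set X‡ := X† − γ·U_M V_M^T for γ > 0. Then f(X‡) − f(X†) ≤ −γ·‖∇f(X†)‖_{S₁} + 2√n·γ·‖∇f(X†) − M‖_F + L·n·γ²/2. -/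
open scoped Matrix

attribute [local instance] Matrix.frobeniusSeminormedAddCommGroup
  Matrix.frobeniusNormedAddCommGroup Matrix.frobeniusNormedSpace

namespace MuonAux
open Matrix

/-- The Frobenius inner product of two real matrices. -/
noncomputable def ip {m n : ℕ} (A B : Matrix (Fin m) (Fin n) ℝ) : ℝ :=
  ∑ i, ∑ j, A i j * B i j

variable {m n r : ℕ}

lemma ip_eq_trace (A B : Matrix (Fin m) (Fin n) ℝ) : ip A B = (Aᵀ * B).trace := by
  simp only [ip, Matrix.trace, Matrix.diag, Matrix.mul_apply, Matrix.transpose_apply]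
  exact Finset.sum_comm

lemma ip_self_nonneg (A : Matrix (Fin m) (Fin n) ℝ) : 0 ≤ ip A A := by
  refine Finset.sum_nonneg fun i _ => Finset.sum_nonneg fun j _ => mul_self_nonneg _

lemma norm_eq_sqrt_ip (A : Matrix (Fin m) (Fin n) ℝ) : ‖A‖ = Real.sqrt (ip A A) := by
  rw [Matrix.frobenius_norm_def, ← Real.sqrt_eq_rpow]
  congr 1
  simp [ip, Real.rpow_two, Real.norm_eq_abs, sq_abs, pow_two]

lemma sq_norm (A : Matrix (Fin m) (Fin n) ℝ) : ‖A‖ ^ 2 = ip A A := by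
  rw [norm_eq_sqrt_ip, Real.sq_sqrt (ip_self_nonneg A)]

lemma ip_le (A B : Matrix (Fin m) (Fin n) ℝ) : ip A B ≤ ‖A‖ * ‖B‖ := by
  rw [norm_eq_sqrt_ip, norm_eq_sqrt_ip]
  have h := Real.sum_mul_le_sqrt_mul_sqrt (Finset.univ : Finset (Fin m × Fin n))
    (fun p => A p.1 p.2) (fun p => B p.1 p.2)
  simpa [ip, Fintype.sum_prod_type, pow_two] using h

lemma ip_sub_left (A B C : Matrix (Fin m) (Fin n) ℝ) : ip (A - B) C = ip A C - ip B C := by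
  simp [ip, sub_mul, Finset.sum_sub_distrib]

lemma ip_smul_right (c : ℝ) (A B : Matrix (Fin m) (Fin n) ℝ) : ip A (c • B) = c * ip A B := by
  simp [ip, Finset.mul_sum, Matrix.smul_apply, mul_left_comm]

lemma continuous_ip_left (B : Matrix (Fin m) (Fin n) ℝ) :
    Continuous fun A : Matrix (Fin m) (Fin n) ℝ => ip A B := by
  unfold ip
  fun_prop

/-- The descent lemma for an `L`-smooth function. -/
lemma descent (f : Matrix (Fin m) (Fin n) ℝ → ℝ)
    (G : Matrix (Fin m) (Fin n) ℝ → Matrix (Fin m) (Fin n) ℝ) (L : ℝ)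
    (hdiff : Differentiable ℝ f)
    (hG : ∀ X Y : Matrix (Fin m) (Fin n) ℝ, fderiv ℝ f X Y = ∑ i, ∑ j, G X i j * Y i j)
    (hLip : ∀ X Y : Matrix (Fin m) (Fin n) ℝ, ‖G X - G Y‖ ≤ L * ‖X - Y‖)
    (X D : Matrix (Fin m) (Fin n) ℝ) :
    f (X + D) - f X ≤ ip (G X) D + L * ‖D‖ ^ 2 / 2 := by
  have hpath : ∀ t : ℝ, HasDerivAt (fun s : ℝ => f (X + s • D)) (ip (G (X + t • D)) D) t := by
    intro t
    have h1 : HasDerivAt (fun s : ℝ => X + s • D) D t := by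
      have h0 := ((hasDerivAt_id' t).smul_const D).const_add X
      rw [one_smul] at h0
      exact h0
    have h2 := (hdiff (X + t • D)).hasFDerivAt.comp_hasDerivAt t h1
    have h3 : fderiv ℝ f (X + t • D) D = ip (G (X + t • D)) D := hG _ _
    rw [← h3]
    exact h2
  have hGcont : Continuous G := by
    have : LipschitzWith (Real.toNNReal L) G := by
      refine LipschitzWith.of_dist_le_mul fun x y => ?_
      rw [dist_eq_norm, dist_eq_norm]
      exact (hLip x y).trans
        (mul_le_mul_of_nonneg_right (Real.le_coe_toNNReal L) (norm_nonneg _))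
    exact this.continuous
  have hcont : Continuous fun t : ℝ => ip (G (X + t • D)) D := by
    refine (continuous_ip_left D).comp (hGcont.comp ?_)
    fun_prop
  have hint : IntervalIntegrable (fun t : ℝ => ip (G (X + t • D)) D) MeasureTheory.volume 0 1 :=
    hcont.intervalIntegrable 0 1
  have heq : ∫ t in (0:ℝ)..1, ip (G (X + t • D)) D = f (X + D) - f X := by
    have := intervalIntegral.integral_eq_sub_of_hasDerivAt
      (f := fun s : ℝ => f (X + s • D)) (f' := fun t => ip (G (X + t • D)) D)
      (a := 0) (b := 1) (fun t _ => hpath t) hint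
    simpa using this
  have hbound : ∀ t ∈ Set.Icc (0:ℝ) 1,
      ip (G (X + t • D)) D ≤ ip (G X) D + (L * ‖D‖ ^ 2) * t := by
    intro t ht
    have h1 : ip (G (X + t • D)) D - ip (G X) D = ip (G (X + t • D) - G X) D := by
      rw [ip_sub_left]
    have h2 : ip (G (X + t • D) - G X) D ≤ ‖G (X + t • D) - G X‖ * ‖D‖ := ip_le _ _
    have h3 : ‖G (X + t • D) - G X‖ ≤ L * (t * ‖D‖) := by
      have := hLip (X + t • D) X
      simpa [norm_smul, abs_of_nonneg ht.1] using this
    nlinarith [norm_nonneg D, norm_nonneg (G (X + t • D) - G X)]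
  have hintineq : ∫ t in (0:ℝ)..1, ip (G (X + t • D)) D
      ≤ ∫ t in (0:ℝ)..1, (ip (G X) D + (L * ‖D‖ ^ 2) * t) := by
    refine intervalIntegral.integral_mono_on (by norm_num) hint ?_ hbound
    exact (continuous_const.add (continuous_const.mul continuous_id)).intervalIntegrable 0 1
  have hval : ∫ t in (0:ℝ)..1, (ip (G X) D + (L * ‖D‖ ^ 2) * t)
      = ip (G X) D + L * ‖D‖ ^ 2 / 2 := by
    have h2 : IntervalIntegrable (fun t : ℝ => (L * ‖D‖ ^ 2) * t) MeasureTheory.volume 0 1 :=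
      (continuous_const.mul continuous_id).intervalIntegrable 0 1
    rw [intervalIntegral.integral_add intervalIntegrable_const h2,
      intervalIntegral.integral_const_mul, integral_id, intervalIntegral.integral_const]
    norm_num
    ring
  rw [← heq]
  rw [hval] at hintineq
  exact hintineq

/-- A dual witness for the nuclear norm: a "partial isometry" attaining the nuclear norm. -/
lemma exists_dual (A : Matrix (Fin m) (Fin n) ℝ) :
    ∃ O : Matrix (Fin m) (Fin n) ℝ,
      ip A O = nuclearNorm A ∧ ip O O ≤ n ∧ (O * Oᵀ)ᵀ = O * Oᵀ ∧
        (O * Oᵀ) * (O * Oᵀ) = O * Oᵀ := by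
  classical
  set hH := Matrix.isHermitian_conjTranspose_mul_self A with hHdef
  set W : Matrix (Fin n) (Fin n) ℝ :=
    (Matrix.IsHermitian.eigenvectorUnitary hH : Matrix (Fin n) (Fin n) ℝ) with hWdef
  set Λ : Fin n → ℝ := hH.eigenvalues with hΛdef
  have hEig : ∀ i, 0 ≤ Λ i := fun i =>
    (Matrix.posSemidef_conjTranspose_mul_self A).eigenvalues_nonneg i
  have hu := (Matrix.IsHermitian.eigenvectorUnitary hH).2
  rw [Unitary.mem_iff] at hu
  have hW1 : Wᵀ * W = 1 := by
    rw [← Matrix.conjTranspose_eq_transpose_of_trivial, ← Matrix.star_eq_conjTranspose]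
    exact hu.1
  have hW2 : W * Wᵀ = 1 := by
    rw [← Matrix.conjTranspose_eq_transpose_of_trivial, ← Matrix.star_eq_conjTranspose]
    exact hu.2
  have hspec : Aᵀ * A = W * Matrix.diagonal Λ * Wᵀ := by
    rw [← Matrix.conjTranspose_eq_transpose_of_trivial A,
      ← Matrix.conjTranspose_eq_transpose_of_trivial W, ← Matrix.star_eq_conjTranspose]
    have := hH.spectral_theorem
    rw [hWdef, hΛdef]
    simpa using this
  have cancel1 : ∀ {k : ℕ} (X : Matrix (Fin n) (Fin k) ℝ), Wᵀ * (W * X) = X := fun X => by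
    rw [← Matrix.mul_assoc, hW1, Matrix.one_mul]
  have haa : ∀ {k : ℕ} (Y : Matrix (Fin n) (Fin k) ℝ),
      Aᵀ * (A * Y) = W * (Matrix.diagonal Λ * (Wᵀ * Y)) := fun Y => by
    rw [← Matrix.mul_assoc, hspec]
    simp only [Matrix.mul_assoc]
  set d : Fin n → ℝ := fun i => if Λ i = 0 then 0 else (Real.sqrt (Λ i))⁻¹ with hddef
  set P : Matrix (Fin n) (Fin n) ℝ := Matrix.diagonal d with hPdef
  set O : Matrix (Fin m) (Fin n) ℝ := A * (W * (P * Wᵀ)) with hOdef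
  have hOt : Oᵀ = W * (P * (Wᵀ * Aᵀ)) := by
    rw [hOdef]
    simp only [Matrix.transpose_mul, Matrix.transpose_transpose, hPdef,
      Matrix.diagonal_transpose, Matrix.mul_assoc]
  have hdd : ∀ {k : ℕ} (Z : Matrix (Fin n) (Fin k) ℝ) (e g : Fin n → ℝ),
      Matrix.diagonal e * (Matrix.diagonal g * Z) = Matrix.diagonal (fun i => e i * g i) * Z :=
    fun Z e g => by rw [← Matrix.mul_assoc, Matrix.diagonal_mul_diagonal]
  have hsum : ∀ i, Λ i * d i = Real.sqrt (Λ i) := by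
    intro i
    by_cases h : Λ i = 0
    · simp [hddef, h]
    · have hs : Real.sqrt (Λ i) * Real.sqrt (Λ i) = Λ i := Real.mul_self_sqrt (hEig i)
      have hpos : 0 < Λ i := lt_of_le_of_ne (hEig i) (Ne.symm h)
      have hsne : Real.sqrt (Λ i) ≠ 0 := by positivity
      simp only [hddef, if_neg h]
      rw [← div_eq_mul_inv, div_eq_iff hsne]
      exact hs.symm
  refine ⟨O, ?_, ?_, ?_, ?_⟩
  · -- ip A O = nuclearNorm A
    rw [ip_eq_trace, hOdef, haa, cancel1]
    rw [Matrix.trace_mul_comm]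
    simp only [Matrix.mul_assoc]
    rw [hW1, Matrix.mul_one, hPdef, Matrix.diagonal_mul_diagonal, Matrix.trace_diagonal]
    unfold nuclearNorm
    refine Finset.sum_congr rfl fun i _ => ?_
    show Λ i * d i = Real.sqrt (Λ i)
    exact hsum i
  · -- ip O O ≤ n
    have hOO : Oᵀ * O = W * (Matrix.diagonal (fun i => d i * Λ i * d i) * Wᵀ) := by
      rw [hOt, hOdef]
      simp only [Matrix.mul_assoc]
      rw [haa, cancel1, cancel1, hPdef, hdd, hdd]
    rw [ip_eq_trace, hOO, Matrix.trace_mul_comm, Matrix.mul_assoc, hW1, Matrix.mul_one,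
      Matrix.trace_diagonal]
    calc (∑ i, d i * Λ i * d i) ≤ ∑ _i : Fin n, 1 := by
          refine Finset.sum_le_sum fun i _ => ?_
          by_cases h : Λ i = 0
          · simp [hddef, h]
          · have hs : Real.sqrt (Λ i) * Real.sqrt (Λ i) = Λ i := Real.mul_self_sqrt (hEig i)
            have hsne : Real.sqrt (Λ i) ≠ 0 := by
              have hpos : 0 < Λ i := lt_of_le_of_ne (hEig i) (Ne.symm h)
              positivity
            have hrw : d i * Λ i * d i = Λ i / (Real.sqrt (Λ i) * Real.sqrt (Λ i)) := by
              simp only [hddef, if_neg h]; ring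
            rw [hrw, hs, div_self h]
      _ = n := by simp
  · -- (O * Oᵀ)ᵀ = O * Oᵀ
    have hQ : O * Oᵀ = A * (W * (Matrix.diagonal (fun i => d i * d i) * (Wᵀ * Aᵀ))) := by
      rw [hOdef, hOt]
      simp only [Matrix.mul_assoc]
      rw [cancel1, hPdef, hdd]
    rw [hQ]
    simp only [Matrix.transpose_mul, Matrix.transpose_transpose, Matrix.diagonal_transpose,
      Matrix.mul_assoc]
  · -- (O * Oᵀ) * (O * Oᵀ) = O * Oᵀ
    have hQ : O * Oᵀ = A * (W * (Matrix.diagonal (fun i => d i * d i) * (Wᵀ * Aᵀ))) := by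
      rw [hOdef, hOt]
      simp only [Matrix.mul_assoc]
      rw [cancel1, hPdef, hdd]
    rw [hQ]
    simp only [Matrix.mul_assoc]
    rw [haa, cancel1, cancel1, hdd, hdd]
    have hfun : (fun i => d i * d i * Λ i * (d i * d i)) = fun i => d i * d i := by
      funext i
      by_cases h : Λ i = 0
      · simp [hddef, h]
      · have hs : Real.sqrt (Λ i) * Real.sqrt (Λ i) = Λ i := Real.mul_self_sqrt (hEig i)
        have hinv : d i * d i = (Λ i)⁻¹ := by
          simp only [hddef, if_neg h]
          rw [← mul_inv, hs]
        rw [hinv, inv_mul_cancel₀ h, one_mul]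
    rw [hfun]

lemma sq_diag_nonneg {p q : ℕ} (B : Matrix (Fin p) (Fin q) ℝ) (k : Fin q) :
    0 ≤ (Bᵀ * B) k k := by
  rw [Matrix.mul_apply]
  exact Finset.sum_nonneg fun j _ => by
    simp only [Matrix.transpose_apply]; exact mul_self_nonneg _

lemma sq_diag_eq {p q : ℕ} (B : Matrix (Fin p) (Fin q) ℝ) (k : Fin q) :
    (Bᵀ * B) k k = ∑ j, (B j k) ^ 2 := by
  rw [Matrix.mul_apply]
  exact Finset.sum_congr rfl fun j _ => by
    simp [Matrix.transpose_apply, pow_two]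

lemma diag_proj_le (Q : Matrix (Fin m) (Fin m) ℝ) (hQt : Qᵀ = Q) (hQ2 : Q * Q = Q)
    (U : Matrix (Fin m) (Fin r) ℝ) (hU : Uᵀ * U = 1) (k : Fin r) :
    (Uᵀ * (Q * U)) k k ≤ 1 := by
  have hQQ : (1 - Q) * (1 - Q) = 1 - Q := by
    simp only [Matrix.mul_sub, Matrix.sub_mul, Matrix.mul_one, Matrix.one_mul, hQ2]
    abel
  have key : ((1 - Q) * U)ᵀ * ((1 - Q) * U) = Uᵀ * U - Uᵀ * (Q * U) := by
    rw [Matrix.transpose_mul, Matrix.transpose_sub, Matrix.transpose_one, hQt,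
      Matrix.mul_assoc, ← Matrix.mul_assoc (1 - Q), hQQ, Matrix.sub_mul,
      Matrix.one_mul, Matrix.mul_sub]
  have h0 := sq_diag_nonneg ((1 - Q) * U) k
  rw [key] at h0
  have h1 : (Uᵀ * U) k k = 1 := by rw [hU, Matrix.one_apply_eq]
  have h0' : 0 ≤ (Uᵀ * U) k k - (Uᵀ * (Q * U)) k k := by
    simpa [Matrix.sub_apply] using h0
  linarith

lemma rank_le (V : Matrix (Fin n) (Fin r) ℝ) (hV : Vᵀ * V = 1) : r ≤ n := by
  have h1 : ((1 : Matrix (Fin r) (Fin r) ℝ)).rank = r := by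
    rw [Matrix.rank_one]
    simp
  have h2 : (Vᵀ * V).rank ≤ V.rank := Matrix.rank_mul_le_right Vᵀ V
  have h3 : V.rank ≤ n := by
    have := Matrix.rank_le_card_height V
    simpa using this
  rw [hV, h1] at h2
  omega

lemma ip_O_self (U : Matrix (Fin m) (Fin r) ℝ) (V : Matrix (Fin n) (Fin r) ℝ)
    (hU : Uᵀ * U = 1) (hV : Vᵀ * V = 1) : ip (U * Vᵀ) (U * Vᵀ) = ((r : ℕ) : ℝ) := by
  rw [ip_eq_trace, Matrix.transpose_mul, Matrix.transpose_transpose,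
    Matrix.mul_assoc, ← Matrix.mul_assoc Uᵀ, hU, Matrix.one_mul,
    Matrix.trace_mul_comm, hV]
  simp [Matrix.trace_one]

lemma ip_M_O (U : Matrix (Fin m) (Fin r) ℝ) (S : Matrix (Fin r) (Fin r) ℝ)
    (V : Matrix (Fin n) (Fin r) ℝ) (hU : Uᵀ * U = 1) (hV : Vᵀ * V = 1) :
    ip (U * S * Vᵀ) (U * Vᵀ) = S.trace := by
  rw [ip_eq_trace, Matrix.transpose_mul, Matrix.transpose_mul, Matrix.transpose_transpose]
  simp only [Matrix.mul_assoc]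
  rw [← Matrix.mul_assoc Uᵀ, hU, Matrix.one_mul, Matrix.trace_mul_comm]
  simp only [Matrix.mul_assoc]
  rw [hV, Matrix.mul_one, Matrix.trace_transpose]

lemma ip_M_le (M : Matrix (Fin m) (Fin n) ℝ) (O : Matrix (Fin m) (Fin n) ℝ)
    (U : Matrix (Fin m) (Fin r) ℝ) (S : Matrix (Fin r) (Fin r) ℝ)
    (V : Matrix (Fin n) (Fin r) ℝ)
    (hU : Uᵀ * U = 1) (hV : Vᵀ * V = 1)
    (hSdiag : ∀ i j, i ≠ j → S i j = 0) (hSpos : ∀ i, 0 ≤ S i i)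
    (hM : M = U * S * Vᵀ)
    (hQt : (O * Oᵀ)ᵀ = O * Oᵀ) (hQ2 : (O * Oᵀ) * (O * Oᵀ) = O * Oᵀ) :
    ip M O ≤ S.trace := by
  have hT : ∀ k : Fin r, (Uᵀ * (O * V)) k k ≤ 1 := by
    intro k
    have expand : (Uᵀ * (O * V)) k k = ∑ j, (Oᵀ * U) j k * V j k := by
      simp only [Matrix.mul_apply, Matrix.transpose_apply, Finset.mul_sum, Finset.sum_mul]
      rw [Finset.sum_comm]
      exact Finset.sum_congr rfl fun j _ => Finset.sum_congr rfl fun i _ => by ring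
    have cs := Real.sum_mul_le_sqrt_mul_sqrt Finset.univ
      (fun j => (Oᵀ * U) j k) (fun j => V j k)
    have ha : ∑ j, ((Oᵀ * U) j k) ^ 2 = (Uᵀ * ((O * Oᵀ) * U)) k k := by
      have hmat : (Oᵀ * U)ᵀ * (Oᵀ * U) = Uᵀ * ((O * Oᵀ) * U) := by
        rw [Matrix.transpose_mul, Matrix.transpose_transpose]
        simp only [Matrix.mul_assoc]
      rw [← sq_diag_eq, hmat]
    have hb : ∑ j, (V j k) ^ 2 = 1 := by rw [← sq_diag_eq, hV, Matrix.one_apply_eq]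
    have hproj := diag_proj_le (O * Oᵀ) hQt hQ2 U hU k
    calc (Uᵀ * (O * V)) k k = ∑ j, (Oᵀ * U) j k * V j k := expand
      _ ≤ Real.sqrt (∑ j, ((Oᵀ * U) j k) ^ 2) * Real.sqrt (∑ j, (V j k) ^ 2) := cs
      _ ≤ 1 := by
          rw [ha, hb, Real.sqrt_one, mul_one]
          calc Real.sqrt ((Uᵀ * ((O * Oᵀ) * U)) k k) ≤ Real.sqrt 1 :=
                Real.sqrt_le_sqrt hproj
            _ = 1 := Real.sqrt_one
  have htr : ip M O = ∑ k, S k k * (Uᵀ * (O * V)) k k := by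
    rw [ip_eq_trace, hM, Matrix.transpose_mul, Matrix.transpose_mul,
      Matrix.transpose_transpose]
    rw [Matrix.mul_assoc, Matrix.trace_mul_comm]
    simp only [Matrix.mul_assoc]
    rw [Matrix.trace]
    simp only [Matrix.diag, Matrix.mul_apply, Matrix.transpose_apply]
    refine Finset.sum_congr rfl fun k _ => ?_
    rw [Finset.sum_eq_single k (fun l _ hl => by rw [hSdiag l k hl, zero_mul])
      (fun h => absurd (Finset.mem_univ k) h)]
  rw [htr, Matrix.trace]
  refine Finset.sum_le_sum fun k _ => ?_
  calc S k k * (Uᵀ * (O * V)) k k ≤ S k k * 1 :=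
        mul_le_mul_of_nonneg_left (hT k) (hSpos k)
    _ = S k k := mul_one _

end MuonAux

/-- **step lemma for Muon, Lemma 3 of the paper.**  Let
`f : ℝ^{m×n} → ℝ` be differentiable with `L`-smooth gradient `G` (with respect to the
Frobenius norm, which is the norm `‖·‖` used throughout this statement), let `m ≥ n`,
let `M = U_M Σ_M V_Mᵀ` be a reduced SVD of an arbitrary matrix `M`, and set
`X‡ := X† − γ·U_M V_Mᵀ`.  Then
`f(X‡) − f(X†) ≤ −γ‖∇f(X†)‖_{S₁} + 2√n·γ·‖∇f(X†) − M‖_F + L n γ²/2`. -/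
theorem muon_step_lemma
    {m n r : ℕ} (hmn : n ≤ m)
    (f : Matrix (Fin m) (Fin n) ℝ → ℝ) (G : Matrix (Fin m) (Fin n) ℝ → Matrix (Fin m) (Fin n) ℝ)
    (L : ℝ)
    (hdiff : Differentiable ℝ f)
    (hG : ∀ X Y : Matrix (Fin m) (Fin n) ℝ, fderiv ℝ f X Y = ∑ i, ∑ j, G X i j * Y i j)
    (hLip : ∀ X Y : Matrix (Fin m) (Fin n) ℝ, ‖G X - G Y‖ ≤ L * ‖X - Y‖)
    (Xdag M : Matrix (Fin m) (Fin n) ℝ)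
    (U : Matrix (Fin m) (Fin r) ℝ) (S : Matrix (Fin r) (Fin r) ℝ)
    (V : Matrix (Fin n) (Fin r) ℝ)
    (hU : Uᵀ * U = 1) (hV : Vᵀ * V = 1)
    (hSdiag : ∀ i j, i ≠ j → S i j = 0) (hSpos : ∀ i, 0 ≤ S i i)
    (hM : M = U * S * Vᵀ)
    (γ : ℝ) (hγ : 0 < γ) :
    f (Xdag - γ • (U * Vᵀ)) - f Xdag
      ≤ -γ * nuclearNorm (G Xdag) + 2 * Real.sqrt n * γ * ‖G Xdag - M‖
        + L * n * γ ^ 2 / 2 := by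
  classical
  by_cases hn : n = 0
  · subst hn
    have hXX : Xdag - γ • (U * Vᵀ) = Xdag := by
      funext i j
      exact absurd j.2 (by omega)
    have h1 : nuclearNorm (G Xdag) = 0 := by simp [nuclearNorm]
    have h2 : ‖G Xdag - M‖ = 0 := by
      rw [MuonAux.norm_eq_sqrt_ip]
      simp [MuonAux.ip]
    rw [hXX, sub_self, h1, h2]
    simp
  -- from now on n > 0
  have hn0 : 0 < n := Nat.pos_of_ne_zero hn
  have hm0 : 0 < m := lt_of_lt_of_le hn0 hmn
  have hL : 0 ≤ L := by
    set E : Matrix (Fin m) (Fin n) ℝ := Matrix.single ⟨0, hm0⟩ ⟨0, hn0⟩ 1 with hE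
    have hEne : E ≠ 0 := by
      intro h
      have := congrFun (congrFun h ⟨0, hm0⟩) ⟨0, hn0⟩
      simp [hE, Matrix.single] at this
    have hpos : (0:ℝ) < ‖(0 : Matrix (Fin m) (Fin n) ℝ) - E‖ := by
      rw [zero_sub, norm_neg]
      exact norm_pos_iff.mpr hEne
    have h1 := (norm_nonneg (G 0 - G E)).trans (hLip 0 E)
    nlinarith
  set Gd := G Xdag with hGd
  set O : Matrix (Fin m) (Fin n) ℝ := U * Vᵀ with hO
  obtain ⟨Od, hOd1, hOd2, hOd3, hOd4⟩ := MuonAux.exists_dual Gd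
  have hr : r ≤ n := MuonAux.rank_le V hV
  have hOO : MuonAux.ip O O = ((r : ℕ) : ℝ) := MuonAux.ip_O_self U V hU hV
  have hnormO : ‖O‖ ^ 2 ≤ (n : ℝ) := by
    rw [MuonAux.sq_norm, hOO]
    exact_mod_cast hr
  -- descent step
  have hdes := MuonAux.descent f G L hdiff hG hLip Xdag (-(γ • O))
  rw [← sub_eq_add_neg] at hdes
  have hip1 : MuonAux.ip Gd (-(γ • O)) = -γ * MuonAux.ip Gd O := by
    have : -(γ • O) = (-γ) • O := by simp
    rw [this, MuonAux.ip_smul_right]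
  have hnormD : ‖-(γ • O)‖ ^ 2 = γ ^ 2 * ‖O‖ ^ 2 := by
    rw [norm_neg, norm_smul]
    simp [Real.norm_eq_abs, mul_pow, sq_abs]
  rw [hip1, hnormD] at hdes
  -- Cauchy–Schwarz bounds
  have hOdnorm : ‖Od‖ ≤ Real.sqrt n := by
    rw [MuonAux.norm_eq_sqrt_ip]
    exact Real.sqrt_le_sqrt hOd2
  have hGM : (0:ℝ) ≤ ‖Gd - M‖ := norm_nonneg _
  have hsqn : (0:ℝ) ≤ Real.sqrt n := Real.sqrt_nonneg _
  have hCS1 : MuonAux.ip (Gd - M) Od ≤ Real.sqrt n * ‖Gd - M‖ := by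
    calc MuonAux.ip (Gd - M) Od ≤ ‖Gd - M‖ * ‖Od‖ := MuonAux.ip_le _ _
      _ ≤ ‖Gd - M‖ * Real.sqrt n := mul_le_mul_of_nonneg_left hOdnorm hGM
      _ = Real.sqrt n * ‖Gd - M‖ := mul_comm _ _
  have hOnorm : ‖O‖ ≤ Real.sqrt n := by
    rw [MuonAux.norm_eq_sqrt_ip]
    refine Real.sqrt_le_sqrt ?_
    rw [hOO]
    exact_mod_cast hr
  have hCS2 : MuonAux.ip (M - Gd) O ≤ Real.sqrt n * ‖Gd - M‖ := by
    calc MuonAux.ip (M - Gd) O ≤ ‖M - Gd‖ * ‖O‖ := MuonAux.ip_le _ _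
      _ = ‖Gd - M‖ * ‖O‖ := by rw [norm_sub_rev]
      _ ≤ ‖Gd - M‖ * Real.sqrt n := mul_le_mul_of_nonneg_left hOnorm hGM
      _ = Real.sqrt n * ‖Gd - M‖ := mul_comm _ _
  -- trace identities
  have hMO : MuonAux.ip M O = S.trace := by
    rw [hM, hO]
    exact MuonAux.ip_M_O U S V hU hV
  have hMOd : MuonAux.ip M Od ≤ S.trace :=
    MuonAux.ip_M_le M Od U S V hU hV hSdiag hSpos hM hOd3 hOd4
  -- nuclear norm bound
  have hsub1 : MuonAux.ip (Gd - M) Od = MuonAux.ip Gd Od - MuonAux.ip M Od :=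
    MuonAux.ip_sub_left _ _ _
  have hsub2 : MuonAux.ip (M - Gd) O = MuonAux.ip M O - MuonAux.ip Gd O :=
    MuonAux.ip_sub_left _ _ _
  have hnuc : nuclearNorm Gd ≤ S.trace + Real.sqrt n * ‖Gd - M‖ := by
    rw [← hOd1]
    linarith
  have hGdO : S.trace - Real.sqrt n * ‖Gd - M‖ ≤ MuonAux.ip Gd O := by linarith
  -- combine everything
  have hfinal : -γ * MuonAux.ip Gd O + L * (γ ^ 2 * ‖O‖ ^ 2) / 2
      ≤ -γ * nuclearNorm Gd + 2 * Real.sqrt n * γ * ‖Gd - M‖ + L * n * γ ^ 2 / 2 := by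
    have hγ2 : (0:ℝ) ≤ γ ^ 2 := sq_nonneg _
    nlinarith [mul_le_mul_of_nonneg_left hnormO (mul_nonneg hL hγ2)]
  exact hdes.trans hfinal
end
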